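/- Let N ⊆ (0,∞) be an infinite set whose elements form a decreasing sequence b₁ > b₂ > … with ∑_i b_i² < ∞. Then ∫_0^{b₂} (∑_{j : b_{j+1} ≥ r} √(b_j - b_{j+1})) √r dr < ∞. -/

import Mathlib

open Set MeasureTheory ENNReal

/-- If `b 1 > b 2 > …` is a strictly decreasing positive square-summable sequence
(the elements of an infinite set `N ⊆ (0,∞)`), then
`∫_0^{b₂} (∑_{j ≥ 1, b_{j+1} ≥ r} √(b_j - b_{j+1})) √r dr < ∞`. -/
theorem stmt11 (b : ℕ → ℝ) (hanti : StrictAnti b) (hpos : ∀ i, 0 < b i)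
    (hsum : Summable (fun i => b i ^ 2)) :
    ∫⁻ r in Set.Ioo (0:ℝ) (b 2),
        (∑' j : ℕ, if 1 ≤ j ∧ r ≤ b (j + 1) then
          ENNReal.ofReal (Real.sqrt (b j - b (j + 1)) * Real.sqrt r) else 0) < ⊤ := by
  have hb : ∀ j : ℕ, b (j + 1) < b j := fun j => hanti (Nat.lt_succ_self j)
  have hmeas : ∀ j : ℕ, Measurable (fun r : ℝ =>
      if 1 ≤ j ∧ r ≤ b (j + 1) then
        ENNReal.ofReal (Real.sqrt (b j - b (j + 1)) * Real.sqrt r) else 0) := by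
    intro j
    by_cases hj : 1 ≤ j
    · simp only [hj, true_and]
      exact Measurable.ite measurableSet_Iic
        (ENNReal.measurable_ofReal.comp (measurable_const.mul Real.continuous_sqrt.measurable))
        measurable_const
    · simp [hj]
  rw [lintegral_tsum (fun j => (hmeas j).aemeasurable)]
  -- bound each term
  set B : ℕ → ℝ≥0∞ := fun j =>
    ENNReal.ofReal (Real.sqrt (b j - b (j + 1)) * Real.sqrt (b (j + 1)) * b (j + 1)) with hB
  have hterm : ∀ j : ℕ,
      (∫⁻ r in Set.Ioo (0:ℝ) (b 2),
        (if 1 ≤ j ∧ r ≤ b (j + 1) then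
          ENNReal.ofReal (Real.sqrt (b j - b (j + 1)) * Real.sqrt r) else 0)) ≤ B j := by
    intro j
    set C : ℝ≥0∞ := ENNReal.ofReal (Real.sqrt (b j - b (j + 1)) * Real.sqrt (b (j + 1))) with hC
    have hpt : ∀ r : ℝ,
        (if 1 ≤ j ∧ r ≤ b (j + 1) then
          ENNReal.ofReal (Real.sqrt (b j - b (j + 1)) * Real.sqrt r) else 0)
        ≤ (Set.Iic (b (j + 1))).indicator (fun _ => C) r := by
      intro r
      by_cases h : 1 ≤ j ∧ r ≤ b (j + 1)
      · rw [if_pos h, Set.indicator_of_mem (show r ∈ Set.Iic (b (j + 1)) from h.2)]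
        exact ENNReal.ofReal_le_ofReal
          (mul_le_mul_of_nonneg_left (Real.sqrt_le_sqrt h.2) (Real.sqrt_nonneg _))
      · rw [if_neg h]; exact zero_le
    calc (∫⁻ r in Set.Ioo (0:ℝ) (b 2),
        (if 1 ≤ j ∧ r ≤ b (j + 1) then
          ENNReal.ofReal (Real.sqrt (b j - b (j + 1)) * Real.sqrt r) else 0))
        ≤ ∫⁻ r in Set.Ioo (0:ℝ) (b 2),
            (Set.Iic (b (j + 1))).indicator (fun _ => C) r :=
          lintegral_mono (fun r => hpt r)
      _ = C * (volume.restrict (Set.Ioo (0:ℝ) (b 2))) (Set.Iic (b (j + 1))) := by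
          rw [lintegral_indicator measurableSet_Iic, setLIntegral_const]
      _ ≤ C * ENNReal.ofReal (b (j + 1)) := by
          gcongr
          rw [Measure.restrict_apply measurableSet_Iic]
          calc volume (Set.Iic (b (j + 1)) ∩ Set.Ioo (0:ℝ) (b 2))
              ≤ volume (Set.Ioc (0:ℝ) (b (j + 1))) := by
                apply measure_mono
                rintro x ⟨hx1, hx2, _⟩
                exact ⟨hx2, hx1⟩
            _ = ENNReal.ofReal (b (j + 1)) := by
                rw [Real.volume_Ioc, sub_zero]
      _ = B j := by
          rw [hC, hB, ← ENNReal.ofReal_mul (by positivity)]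
  -- sum of the bounds is finite
  set v : ℕ → ℝ := fun j => ((b j - b (j + 1)) * b (j + 1) + b (j + 1) ^ 2) / 2 with hv
  have hvnonneg : ∀ j, 0 ≤ v j := by
    intro j
    have := (hb j).le
    have := (hpos (j + 1)).le
    rw [hv]
    nlinarith
  have hBv : ∀ j, B j ≤ ENNReal.ofReal (v j) := by
    intro j
    apply ENNReal.ofReal_le_ofReal
    have h1 : 0 ≤ b j - b (j + 1) := sub_nonneg.2 (hb j).le
    have h2 : 0 ≤ b (j + 1) := (hpos (j + 1)).le
    have hx : Real.sqrt (b j - b (j + 1)) * Real.sqrt (b (j + 1))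
        = Real.sqrt ((b j - b (j + 1)) * b (j + 1)) := (Real.sqrt_mul h1 _).symm
    rw [hx]
    set s := Real.sqrt ((b j - b (j + 1)) * b (j + 1)) with hs
    have hs0 : 0 ≤ s := Real.sqrt_nonneg _
    have hs2 : s ^ 2 = (b j - b (j + 1)) * b (j + 1) := Real.sq_sqrt (by positivity)
    rw [hv]
    nlinarith [sq_nonneg (s - b (j + 1))]
  have htel : Summable (fun j => b j ^ 2 - b (j + 1) ^ 2) := by
    apply summable_of_sum_range_le (c := b 0 ^ 2)
    · intro j
      have := (hb j).le
      have := (hpos (j + 1)).le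
      nlinarith
    · intro n
      rw [Finset.sum_range_sub' (fun i => b i ^ 2)]
      nlinarith [sq_nonneg (b n)]
  have hsum1 : Summable (fun j => (b j - b (j + 1)) * b (j + 1)) := by
    apply Summable.of_nonneg_of_le
      (fun j => by nlinarith [(hb j).le, (hpos (j + 1)).le])
      (fun j => ?_) (htel.div_const 2)
    have h1 := (hb j).le
    have h2 := (hpos (j + 1)).le
    nlinarith
  have hsumv : Summable v := by
    have h2 : Summable (fun j => b (j + 1) ^ 2) := by
      exact (summable_nat_add_iff 1).2 hsum
    exact ((hsum1.add h2).div_const 2)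
  calc ∑' j, (∫⁻ r in Set.Ioo (0:ℝ) (b 2),
        (if 1 ≤ j ∧ r ≤ b (j + 1) then
          ENNReal.ofReal (Real.sqrt (b j - b (j + 1)) * Real.sqrt r) else 0))
      ≤ ∑' j, B j := ENNReal.tsum_le_tsum hterm
    _ ≤ ∑' j, ENNReal.ofReal (v j) := ENNReal.tsum_le_tsum hBv
    _ = ENNReal.ofReal (∑' j, v j) :=
        (ENNReal.ofReal_tsum_of_nonneg hvnonneg hsumv).symm
    _ < ⊤ := ENNReal.ofReal_lt_top
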